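/- Let Φ denote the standard normal CDF. For every α ∈ (0, 0.25) and every ψ ∈ [1/2, 0.9], writing c̄ = Φ^{-1}(1 − ψα) and c̃ = Φ^{-1}(1 − α + Φ(−c̄)), one has c̃ + c̄ < 2Φ^{-1}(1 − α/4). (Equivalently, the critical value ψ* at which c̃ + c̄ = 2Φ^{-1}(1 − α/4) satisfies ψ* > 0.9 for all α ∈ (0, 0.25).) -/

import Mathlib

/-!
STATEMENT 9: For every α ∈ (0, 0.25) and ψ ∈ [1/2, 0.9], with c̄ = Φ⁻¹(1 − ψα) and
c̃ = Φ⁻¹(1 − α + Φ(−c̄)), one has c̃ + c̄ < 2Φ⁻¹(1 − α/4).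
-/

open MeasureTheory ProbabilityTheory

/-- The standard normal cumulative distribution function `Φ`. -/
noncomputable def Phi : ℝ → ℝ := fun x => ProbabilityTheory.cdf (gaussianReal 0 1) x

/-- The inverse `Φ⁻¹` of the standard normal CDF (junk values off `(0,1)`). -/
noncomputable def PhiInv : ℝ → ℝ := Function.invFun Phi

open Set Filter
open scoped Topology

noncomputable def stdphi : ℝ → ℝ := fun t => (Real.sqrt (2 * Real.pi))⁻¹ * Real.exp (-t ^ 2 / 2)

lemma stdphi_pos (t : ℝ) : 0 < stdphi t := by
  have h : 0 < Real.sqrt (2 * Real.pi) := Real.sqrt_pos.2 (by positivity)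
  exact mul_pos (inv_pos.2 h) (Real.exp_pos _)

lemma gaussianPDFReal_eq : gaussianPDFReal 0 1 = stdphi := by
  funext x
  simp [gaussianPDFReal, stdphi]

lemma integrable_stdphi : Integrable stdphi := by
  rw [← gaussianPDFReal_eq]; exact integrable_gaussianPDFReal 0 1

lemma integral_stdphi : ∫ t, stdphi t = 1 := by
  rw [← gaussianPDFReal_eq]; exact integral_gaussianPDFReal_eq_one 0 one_ne_zero

lemma Phi_eq (x : ℝ) : Phi x = ∫ t in Iic x, stdphi t := by
  have h1 : Phi x = ((gaussianReal 0 1) (Iic x)).toReal := cdf_eq_real _ x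
  rw [h1, gaussianReal_apply_eq_integral _ one_ne_zero _, gaussianPDFReal_eq,
    ENNReal.toReal_ofReal]
  exact setIntegral_nonneg measurableSet_Iic fun t _ => (stdphi_pos t).le

lemma continuous_stdphi : Continuous stdphi := by
  unfold stdphi; fun_prop

lemma Phi_sub (x : ℝ) : Phi x = Phi 0 + ∫ t in (0:ℝ)..x, stdphi t := by
  rw [Phi_eq, Phi_eq, ← intervalIntegral.integral_Iic_sub_Iic integrable_stdphi.integrableOn
    integrable_stdphi.integrableOn]
  ring

lemma hasDerivAt_Phi (x : ℝ) : HasDerivAt Phi (stdphi x) x := by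
  have hP : Phi = fun y => Phi 0 + ∫ t in (0:ℝ)..y, stdphi t := funext Phi_sub
  rw [hP]
  exact (intervalIntegral.integral_hasDerivAt_right
    integrable_stdphi.intervalIntegrable
    continuous_stdphi.stronglyMeasurable.stronglyMeasurableAtFilter
    continuous_stdphi.continuousAt).const_add (Phi 0)

lemma Phi_strictMono : StrictMono Phi :=
  strictMono_of_deriv_pos fun x => by
    rw [(hasDerivAt_Phi x).deriv]; exact stdphi_pos x

lemma Phi_continuous : Continuous Phi :=
  continuous_iff_continuousAt.2 fun x => (hasDerivAt_Phi x).continuousAt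

lemma Phi_neg (x : ℝ) : Phi (-x) = 1 - Phi x := by
  have h2 : ∫ s in Ioi x, stdphi (-s) = ∫ s in Iic (-x), stdphi s :=
    integral_comp_neg_Ioi x stdphi
  have h3 : (fun s => stdphi (-s)) = stdphi := by
    funext s; simp [stdphi, neg_sq]
  rw [h3] at h2
  have h4 := intervalIntegral.integral_Iic_add_Ioi (b := x) integrable_stdphi.integrableOn
    integrable_stdphi.integrableOn
  rw [integral_stdphi] at h4
  rw [Phi_eq, Phi_eq, ← h2]
  linarith

lemma Phi_zero : Phi 0 = 1/2 := by
  have := Phi_neg 0; rw [neg_zero] at this; linarith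

lemma Phi_pos (x : ℝ) : 0 < Phi x := by
  by_contra h
  push_neg at h
  have h0 : (0:ℝ) ≤ Phi (x - 1) := cdf_nonneg _ _
  have := Phi_strictMono (show x - 1 < x by linarith)
  linarith

lemma Phi_lt_one (x : ℝ) : Phi x < 1 := by
  have := Phi_pos (-x); rw [Phi_neg] at this; linarith

lemma Q_eq (x : ℝ) : 1 - Phi x = ∫ t in Ioi x, stdphi t := by
  have h4 := intervalIntegral.integral_Iic_add_Ioi (b := x) integrable_stdphi.integrableOn
    integrable_stdphi.integrableOn
  rw [integral_stdphi] at h4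
  rw [Phi_eq]; linarith

lemma hasDerivAt_stdphi (x : ℝ) : HasDerivAt stdphi (-x * stdphi x) x := by
  have h1 : HasDerivAt (fun t : ℝ => -t ^ 2 / 2) (-x) x := by
    have h0 := ((hasDerivAt_pow 2 x).neg).div_const 2
    refine h0.congr_deriv ?_
    simp
    ring
  have h2 := h1.exp
  have h3 := h2.const_mul ((Real.sqrt (2 * Real.pi))⁻¹)
  refine h3.congr_deriv ?_
  unfold stdphi; ring

lemma integrable_id_mul_stdphi : Integrable (fun s => s * stdphi s) := by
  have h := (integrable_mul_exp_neg_mul_sq (b := (1/2:ℝ)) (by norm_num)).const_mul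
    ((Real.sqrt (2 * Real.pi))⁻¹)
  refine h.congr (ae_of_all _ fun s => ?_)
  show (Real.sqrt (2 * Real.pi))⁻¹ * (s * Real.exp (-(1/2) * s ^ 2)) = s * stdphi s
  unfold stdphi
  rw [show -(1/2 : ℝ) * s ^ 2 = -s ^ 2 / 2 by ring]
  ring

lemma tendsto_stdphi_atTop : Tendsto stdphi atTop (𝓝 0) := by
  have h1 : Tendsto (fun s : ℝ => -s ^ 2 / 2) atTop atBot := by
    apply Tendsto.atBot_div_const (by norm_num)
    exact tendsto_neg_atTop_atBot.comp (tendsto_pow_atTop two_ne_zero)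
  have h2 : Tendsto (fun s : ℝ => Real.exp (-s ^ 2 / 2)) atTop (𝓝 0) :=
    Real.tendsto_exp_atBot.comp h1
  have h3 := h2.const_mul ((Real.sqrt (2 * Real.pi))⁻¹)
  rw [mul_zero] at h3
  exact h3

lemma integral_id_mul_stdphi (t : ℝ) : ∫ s in Ioi t, s * stdphi s = stdphi t := by
  have hderiv : ∀ x ∈ Ioi t, HasDerivAt (fun s => -stdphi s) (x * stdphi x) x := by
    intro x _
    exact (hasDerivAt_stdphi x).neg.congr_deriv (by ring)
  have htends : Tendsto (fun s => -stdphi s) atTop (𝓝 0) := by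
    simpa using tendsto_stdphi_atTop.neg
  have hcont : ContinuousWithinAt (fun s => -stdphi s) (Ici t) t :=
    (continuous_stdphi.neg).continuousWithinAt
  have := integral_Ioi_of_hasDerivAt_of_tendsto hcont hderiv
    integrable_id_mul_stdphi.integrableOn htends
  simpa using this

lemma mills {t : ℝ} (_ht : 0 ≤ t) : t * (1 - Phi t) ≤ stdphi t := by
  rw [Q_eq, ← integral_id_mul_stdphi t, ← integral_const_mul]
  apply setIntegral_mono_on
  · exact (integrable_stdphi.const_mul t).integrableOn
  · exact integrable_id_mul_stdphi.integrableOn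
  · exact measurableSet_Ioi
  · intro s hs
    exact mul_le_mul_of_nonneg_right (le_of_lt hs) (stdphi_pos s).le

lemma Phi_surj {p : ℝ} (h0 : 0 < p) (h1 : p < 1) : ∃ x, Phi x = p := by
  have hbot : Tendsto Phi atBot (𝓝 0) := tendsto_cdf_atBot _
  have htop : Tendsto Phi atTop (𝓝 1) := tendsto_cdf_atTop _
  obtain ⟨a, ha⟩ := (hbot.eventually_lt_const h0).exists
  obtain ⟨b, hb⟩ := (htop.eventually_const_lt h1).exists
  have hab : a ≤ b := by
    by_contra h
    push_neg at h
    have := Phi_strictMono h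
    linarith
  obtain ⟨x, _, hx⟩ := intermediate_value_Icc hab Phi_continuous.continuousOn
    (show p ∈ Icc (Phi a) (Phi b) from ⟨ha.le, hb.le⟩)
  exact ⟨x, hx⟩

lemma Phi_PhiInv {p : ℝ} (h0 : 0 < p) (h1 : p < 1) : Phi (PhiInv p) = p :=
  Function.invFun_eq (Phi_surj h0 h1)

lemma logQ_concave : ConcaveOn ℝ (Ici (0:ℝ)) (fun t => Real.log (1 - Phi t)) := by
  have hQpos : ∀ t : ℝ, 0 < 1 - Phi t := fun t => by have := Phi_lt_one t; linarith
  have hQd : ∀ t : ℝ, HasDerivAt (fun y => 1 - Phi y) (-stdphi t) t := fun t =>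
    (hasDerivAt_Phi t).const_sub 1
  apply concaveOn_of_hasDerivWithinAt2_nonpos (f' := fun t => -stdphi t / (1 - Phi t))
    (f'' := fun t => ((t * stdphi t) * (1 - Phi t) - stdphi t * stdphi t) / (1 - Phi t) ^ 2)
    (convex_Ici 0)
  · exact (continuous_const.sub Phi_continuous).log (fun t => (hQpos t).ne') |>.continuousOn
  · intro x _
    exact (((hQd x).log (hQpos x).ne')).hasDerivWithinAt
  · intro x _
    have hnum : HasDerivAt (fun t => -stdphi t) (x * stdphi x) x := by
      exact (hasDerivAt_stdphi x).neg.congr_deriv (by ring)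
    have := hnum.div (hQd x) (hQpos x).ne'
    refine (this.congr_deriv ?_).hasDerivWithinAt
    field_simp
    try ring
  · intro x hx
    rw [interior_Ici] at hx
    apply div_nonpos_of_nonpos_of_nonneg _ (sq_nonneg _)
    have h1 := mills (le_of_lt hx)
    have h2 := stdphi_pos x
    nlinarith

theorem ctil_add_cbar_lt_two_cquarter (α ψ : ℝ)
    (hα : 0 < α) (hα' : α < 0.25) (hψ : 1/2 ≤ ψ) (hψ' : ψ ≤ 0.9) :
    PhiInv (1 - α + Phi (-PhiInv (1 - ψ * α))) + PhiInv (1 - ψ * α) <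
      2 * PhiInv (1 - α / 4) := by
  have hα4 : α < 1/4 := by linarith [show (0.25:ℝ) = 1/4 by norm_num]
  have hψ0 : 0 < ψ := by linarith
  have hb0 : 0 < ψ * α := mul_pos hψ0 hα
  have hb2 : ψ * α < 1/2 := by nlinarith
  have ha0 : 0 < α - ψ * α := by nlinarith
  have ha2 : α - ψ * α < 1/2 := by nlinarith
  have hPcb : Phi (PhiInv (1 - ψ * α)) = 1 - ψ * α :=
    Phi_PhiInv (by linarith) (by linarith)
  set cb := PhiInv (1 - ψ * α) with hcbdef
  have hcb0 : 0 < cb :=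
    Phi_strictMono.lt_iff_lt.mp (by rw [hPcb, Phi_zero]; linarith)
  have hneg : Phi (-cb) = ψ * α := by rw [Phi_neg, hPcb]; ring
  rw [hneg, show 1 - α + ψ * α = 1 - (α - ψ * α) by ring]
  have hPct : Phi (PhiInv (1 - (α - ψ * α))) = 1 - (α - ψ * α) :=
    Phi_PhiInv (by linarith) (by linarith)
  set ct := PhiInv (1 - (α - ψ * α)) with hctdef
  have hct0 : 0 < ct :=
    Phi_strictMono.lt_iff_lt.mp (by rw [hPct, Phi_zero]; linarith)
  have hPm : Phi (PhiInv (1 - α / 4)) = 1 - α / 4 :=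
    Phi_PhiInv (by linarith) (by linarith)
  set m := PhiInv (1 - α / 4) with hmdef
  have hconc := logQ_concave.2 (mem_Ici.mpr hct0.le) (mem_Ici.mpr hcb0.le)
    (by norm_num : (0:ℝ) ≤ 1/2) (by norm_num : (0:ℝ) ≤ 1/2) (by norm_num)
  simp only [smul_eq_mul] at hconc
  rw [hPct, hPcb, show (1:ℝ) - (1 - (α - ψ * α)) = α - ψ * α by ring,
    show (1:ℝ) - (1 - ψ * α) = ψ * α by ring] at hconc
  set mid := 1/2 * ct + 1/2 * cb with hmiddef
  have hQmid : 0 < 1 - Phi mid := by have := Phi_lt_one mid; linarith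
  have hsq : Real.log (Real.sqrt ((α - ψ * α) * (ψ * α))) ≤ Real.log (1 - Phi mid) := by
    rw [Real.log_sqrt (by positivity), Real.log_mul (ne_of_gt ha0) (ne_of_gt hb0)]
    linarith
  have hle : Real.sqrt ((α - ψ * α) * (ψ * α)) ≤ 1 - Phi mid :=
    (Real.log_le_log_iff (Real.sqrt_pos.mpr (by positivity)) hQmid).mp hsq
  have hgt : α / 4 < Real.sqrt ((α - ψ * α) * (ψ * α)) := by
    rw [Real.lt_sqrt (by linarith)]
    have h9 : (0:ℝ) ≤ (ψ - 0.1) * (0.9 - ψ) :=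
      mul_nonneg (by linarith) (by linarith)
    nlinarith [sq_nonneg α, mul_pos hα hα]
  have hmono : Phi mid < Phi m := by rw [hPm]; linarith
  have hlt : mid < m := Phi_strictMono.lt_iff_lt.mp hmono
  rw [hmiddef] at hlt
  linarith
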